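/- For all strictly positive parameters (p, τ, τL, E, X, η, cY, mS, mF, i), if Q_econ ≥ 1 then α·E·η > β·cY + mS/X (i.e., the coefficient A₁ strictly exceeds A₂ + A₃): a fundamental requirement for economic viability is A = A₁ − A₂ − A₃ > 0. -/

import Mathlib

/-- The annuity (amortization) factor `φ(i, τL)` with the interest rate `i` in percent. -/
noncomputable def annuity (i tL : ℝ) : ℝ :=
  0.01 * i * (1 + 0.01 * i) ^ tL / ((1 + 0.01 * i) ^ tL - 1)

/-- The utilization factor `U = X / (X + p·τ)`. -/
noncomputable def util (p tau X : ℝ) : ℝ := X / (X + p * tau)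

/-- The economic gain factor `Q_econ` of the fusion power plant model,
with `α = 8.76×10⁻³` and `β = 31.5`. -/
noncomputable def Qecon (p tau tL E X eta cY mS mF i : ℝ) : ℝ :=
  (8.76e-3 * E * eta * p * util p tau X) /
    (31.5 * cY * p * util p tau X + mS * (p / X) * util p tau X + mF * annuity i tL)

lemma annuity_pos (i tL : ℝ) (hi : 0 < i) (htL : 0 < tL) : 0 < annuity i tL := by
  have h1 : (1 : ℝ) < 1 + 0.01 * i := by nlinarith
  have hx : (1 : ℝ) < (1 + 0.01 * i) ^ tL := Real.one_lt_rpow_iff_of_pos (by linarith) |>.mpr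
    (Or.inl ⟨h1, htL⟩)
  unfold annuity
  apply div_pos (by nlinarith) (by linarith)

/-- **Necessary condition for economic viability.** For all strictly positive
parameters, if `Q_econ ≥ 1` then `α·E·η > β·cY + mS/X`, i.e. `A₁ > A₂ + A₃`. -/
theorem qecon_ge_one_implies_A_pos
    (p tau tL E X eta cY mS mF i : ℝ)
    (hp : 0 < p) (htau : 0 < tau) (htL : 0 < tL) (hE : 0 < E) (hX : 0 < X)
    (heta : 0 < eta) (hcY : 0 < cY) (hmS : 0 < mS) (hmF : 0 < mF) (hi : 0 < i)
    (hQ : 1 ≤ Qecon p tau tL E X eta cY mS mF i) :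
    8.76e-3 * E * eta > 31.5 * cY + mS / X := by
  have hU : 0 < util p tau X := div_pos hX (by positivity)
  have hphi : 0 < annuity i tL := annuity_pos i tL hi htL
  have hD : 0 < 31.5 * cY * p * util p tau X + mS * (p / X) * util p tau X
      + mF * annuity i tL := by positivity
  rw [Qecon, le_div_iff₀ hD, one_mul] at hQ
  have hmS' : mS * (p / X) * util p tau X = (mS / X) * (p * util p tau X) := by ring
  have hpU : 0 < p * util p tau X := by positivity
  rw [gt_iff_lt, ← mul_lt_mul_iff_of_pos_right hpU]
  nlinarith [mul_pos hmF hphi]
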